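/- With notation as in the recursion theorem for σ_x^{(A)} over a finite sequence A = (a_1,…,a_k), if n > b_{2^k} = a_1 + a_2 + … + a_k, then σ_x^{(A)}(n) = ∑_{i=2}^{2^k} (-1)^{s(2i-1)} σ_x^{(A)}(n - b_i). -/

import Mathlib

/-- Binary digit sum: number of ones in the binary expansion of `n`. -/
def binDigitSum (n : ℕ) : ℕ := (Nat.digits 2 n).sum

/-- `b_i(x) = ∑_{j ∈ S_i} a_j^x` where `i - 1 = ∑_{j ∈ S_i} 2^{j-1}` is the binary
expansion of `i-1` (indices `1 ≤ j ≤ k`). -/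
noncomputable def bAssoc (k : ℕ) (a : ℕ → ℕ) (x : ℝ) (i : ℕ) : ℝ :=
  ∑ j ∈ Finset.Icc 1 k, if (i - 1).testBit (j - 1) then (a j : ℝ) ^ x else 0

/-- `b_i = b_i(1) = ∑_{j ∈ S_i} a_j`. -/
def bAssocNat (k : ℕ) (a : ℕ → ℕ) (i : ℕ) : ℕ :=
  ∑ j ∈ Finset.Icc 1 k, if (i - 1).testBit (j - 1) then a j else 0

/-- `σ_x^{(A)}(n) = ∑_{j : a_j ∣ n} a_j^x` for `n ≥ 1` (with multiplicity), `0` for `n ≤ 0`. -/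
noncomputable def sigmaSeq (k : ℕ) (a : ℕ → ℕ) (x : ℝ) (n : ℤ) : ℝ :=
  if 0 < n then ∑ j ∈ Finset.Icc 1 k, (if (a j : ℤ) ∣ n then (a j : ℝ) ^ x else 0) else 0

open Finset

@[simp] lemma binDigitSum_zero' : binDigitSum 0 = 0 := by simp [binDigitSum]

lemma binDigitSum_two_mul_add_one (m : ℕ) :
    binDigitSum (2 * m + 1) = binDigitSum m + 1 := by
  have h1 : (2 * m + 1) % 2 = 1 := by omega
  have h2 : (2 * m + 1) / 2 = m := by omega
  unfold binDigitSum
  rw [Nat.digits_def' (by norm_num : 1 < 2) (by omega), h1, h2, List.sum_cons]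
  omega

lemma binDigitSum_eq_sum_testBit : ∀ (m : ℕ) (n : ℕ), n < 2 ^ m →
    binDigitSum n = ∑ t ∈ range m, (n.testBit t).toNat := by
  intro m
  induction m with
  | zero => intro n hn; interval_cases n; simp
  | succ m ih =>
    intro n hn
    rcases Nat.eq_zero_or_pos n with rfl | hp
    · simp
    have hstep : binDigitSum n = (n % 2) + binDigitSum (n / 2) := by
      unfold binDigitSum
      rw [Nat.digits_def' (by norm_num : 1 < 2) hp, List.sum_cons]
    have h2 : n / 2 < 2 ^ m := by
      have hh : (2:ℕ) ^ (m+1) = 2 * 2 ^ m := by ring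
      omega
    rw [Finset.sum_range_succ', hstep, ih _ h2]
    have hbit0 : (n.testBit 0).toNat = n % 2 := by
      rcases Nat.mod_two_eq_zero_or_one n with h | h <;> simp [Nat.testBit_zero, h]
    simp_rw [Nat.testBit_add_one]
    omega

lemma sum_range_two_pow' (k : ℕ) : ∑ t ∈ range k, 2 ^ t = 2 ^ k - 1 := by
  induction k with
  | zero => simp
  | succ k ih =>
    have h : (0:ℕ) < 2 ^ k := pow_pos (by norm_num) k
    rw [Finset.sum_range_succ, ih, pow_succ]
    omega

lemma sum_two_pow_lt {k : ℕ} {S : Finset ℕ} (hS : S ⊆ range k) :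
    ∑ t ∈ S, 2 ^ t < 2 ^ k := by
  have h1 : ∑ t ∈ S, 2 ^ t ≤ ∑ t ∈ range k, 2 ^ t :=
    Finset.sum_le_sum_of_subset hS
  have h2 : (0:ℕ) < 2 ^ k := pow_pos (by norm_num) k
  rw [sum_range_two_pow'] at h1
  omega

lemma testBit_sum_two_pow_aux : ∀ (k : ℕ) (S : Finset ℕ), S ⊆ range k →
    ∀ u, (∑ t ∈ S, 2 ^ t).testBit u = decide (u ∈ S) := by
  intro k
  induction k with
  | zero =>
    intro S hS u
    have : S = ∅ := Finset.subset_empty.mp (by simpa using hS)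
    subst this; simp
  | succ k ih =>
    intro S hS u
    by_cases hk : k ∈ S
    · have hS' : S.erase k ⊆ range k := by
        intro t ht
        have h1 := hS (Finset.mem_of_mem_erase ht)
        have h2 := Finset.ne_of_mem_erase ht
        simp only [Finset.mem_range] at h1 ⊢
        omega
      have hsum : ∑ t ∈ S, 2 ^ t = 2 ^ k + ∑ t ∈ S.erase k, 2 ^ t :=
        (Finset.add_sum_erase _ _ hk).symm
      have hlt : ∑ t ∈ S.erase k, 2 ^ t < 2 ^ k := sum_two_pow_lt hS'
      rw [hsum]
      rcases lt_trichotomy u k with h | rfl | h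
      · rw [Nat.testBit_two_pow_add_gt h, ih _ hS' u]
        simp only [Finset.mem_erase, decide_eq_decide]
        constructor
        · exact fun h => h.2
        · exact fun h => ⟨by omega, h⟩
      · rw [Nat.testBit_two_pow_add_eq, Nat.testBit_lt_two_pow hlt]
        simp [hk]
      · have hbig : 2 ^ k + ∑ t ∈ S.erase k, 2 ^ t < 2 ^ u := by
          have h1 : (2:ℕ) ^ (k+1) ≤ 2 ^ u := Nat.pow_le_pow_right (by norm_num) h
          have h2 : (2:ℕ) ^ (k+1) = 2 * 2 ^ k := by ring
          omega
        rw [Nat.testBit_lt_two_pow hbig]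
        have hu : u ∉ S := fun hu => by
          have := hS hu; simp only [Finset.mem_range] at this; omega
        simp [hu]
    · have hS' : S ⊆ range k := by
        intro t ht
        have h1 := hS ht
        have h2 : t ≠ k := fun h => hk (h ▸ ht)
        simp only [Finset.mem_range] at h1 ⊢
        omega
      exact ih _ hS' u

lemma testBit_sum_two_pow (S : Finset ℕ) (u : ℕ) :
    (∑ t ∈ S, 2 ^ t).testBit u = decide (u ∈ S) := by
  obtain ⟨k, hk⟩ : ∃ k, S ⊆ range k :=
    ⟨(S.sup id) + 1, fun t ht =>
      Finset.mem_range.mpr (Nat.lt_succ_of_le (Finset.le_sup (f := id) ht))⟩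
  exact testBit_sum_two_pow_aux k S hk u

lemma testBit_eq_mem (m u : ℕ) :
    m.testBit u = decide (u ∈ m.bitIndices.toFinset) := by
  conv_lhs => rw [← Finset.twoPowSum_toFinset_bitIndices m]
  exact testBit_sum_two_pow _ u

lemma core_zero (k : ℕ) (a : ℕ → ℕ) (x : ℝ) (n : ℕ)
    (hn : ∑ j ∈ Finset.Icc 1 k, a j < n) :
    ∑ S ∈ (range k).powerset, (-1 : ℝ) ^ S.card *
      sigmaSeq k a x ((n : ℤ) -
        ((∑ j ∈ Finset.Icc 1 k, if j - 1 ∈ S then a j else 0 : ℕ) : ℤ)) = 0 := by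
  have hpos : ∀ S : Finset ℕ,
      (0 : ℤ) < (n : ℤ) - ((∑ j ∈ Finset.Icc 1 k, if j - 1 ∈ S then a j else 0 : ℕ) : ℤ) := by
    intro S
    have hle : (∑ j ∈ Finset.Icc 1 k, if j - 1 ∈ S then a j else 0) ≤
        ∑ j ∈ Finset.Icc 1 k, a j :=
      Finset.sum_le_sum fun j _ => by split <;> omega
    have hlt : (∑ j ∈ Finset.Icc 1 k, if j - 1 ∈ S then a j else 0) < n := by omega
    have := Int.ofNat_lt.mpr hlt
    omega
  have expand : ∀ S ∈ (range k).powerset,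
      (-1 : ℝ) ^ S.card * sigmaSeq k a x ((n : ℤ) -
        ((∑ j ∈ Finset.Icc 1 k, if j - 1 ∈ S then a j else 0 : ℕ) : ℤ)) =
      ∑ j ∈ Finset.Icc 1 k, (-1 : ℝ) ^ S.card *
        (if (a j : ℤ) ∣ ((n : ℤ) -
          ((∑ j' ∈ Finset.Icc 1 k, if j' - 1 ∈ S then a j' else 0 : ℕ) : ℤ))
          then (a j : ℝ) ^ x else 0) := by
    intro S _
    rw [sigmaSeq, if_pos (hpos S), Finset.mul_sum]
  rw [Finset.sum_congr rfl expand, Finset.sum_comm]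
  apply Finset.sum_eq_zero
  intro j hj
  simp only [Finset.mem_Icc] at hj
  have ht : j - 1 ∈ range k := by simp only [Finset.mem_range]; omega
  have hins : range k = insert (j - 1) ((range k).erase (j - 1)) :=
    (Finset.insert_erase ht).symm
  rw [hins, Finset.sum_powerset_insert (Finset.notMem_erase _ _),
    ← Finset.sum_add_distrib]
  apply Finset.sum_eq_zero
  intro S hS
  have hjS : j - 1 ∉ S := fun h =>
    Finset.notMem_erase (j - 1) (range k) (Finset.mem_powerset.mp hS h)
  have hcard : (insert (j - 1) S).card = S.card + 1 :=
    Finset.card_insert_of_notMem hjS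
  have hc : (∑ j' ∈ Finset.Icc 1 k, if j' - 1 ∈ insert (j - 1) S then a j' else 0)
      = (∑ j' ∈ Finset.Icc 1 k, if j' - 1 ∈ S then a j' else 0) + a j := by
    have hpt : ∀ j' ∈ Finset.Icc 1 k,
        (if j' - 1 ∈ insert (j - 1) S then a j' else 0)
          = (if j' - 1 ∈ S then a j' else 0) + (if j' = j then a j' else 0) := by
      intro j' hj'
      simp only [Finset.mem_Icc] at hj'
      by_cases h : j' = j
      · subst h; simp [Finset.mem_insert, hjS]
      · have hne : j' - 1 ≠ j - 1 := by omega
        simp [Finset.mem_insert, hne, h]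
    rw [Finset.sum_congr rfl hpt, Finset.sum_add_distrib,
      Finset.sum_ite_eq' (Finset.Icc 1 k) j (fun j' => a j')]
    simp [Finset.mem_Icc, hj.1, hj.2]
  have hdvd : ((a j : ℤ) ∣ ((n : ℤ) -
      ((∑ j' ∈ Finset.Icc 1 k, if j' - 1 ∈ insert (j - 1) S then a j' else 0 : ℕ) : ℤ)))
      ↔ ((a j : ℤ) ∣ ((n : ℤ) -
      ((∑ j' ∈ Finset.Icc 1 k, if j' - 1 ∈ S then a j' else 0 : ℕ) : ℤ))) := by
    rw [hc]
    push_cast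
    rw [show (n : ℤ) - ((∑ j' ∈ Finset.Icc 1 k, if j' - 1 ∈ S then (a j' : ℤ) else 0) + a j)
        = ((n : ℤ) - (∑ j' ∈ Finset.Icc 1 k, if j' - 1 ∈ S then (a j' : ℤ) else 0)) - a j
      from by ring]
    exact dvd_sub_left (dvd_refl _)
  have hif : (if (a j : ℤ) ∣ ((n : ℤ) -
      ((∑ j' ∈ Finset.Icc 1 k, if j' - 1 ∈ insert (j - 1) S then a j' else 0 : ℕ) : ℤ))
      then (a j : ℝ) ^ x else 0)
      = (if (a j : ℤ) ∣ ((n : ℤ) -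
      ((∑ j' ∈ Finset.Icc 1 k, if j' - 1 ∈ S then a j' else 0 : ℕ) : ℤ))
      then (a j : ℝ) ^ x else 0) := if_congr hdvd rfl rfl
  rw [hcard, hif, pow_succ]
  ring

lemma icc_to_powerset (k : ℕ) (a : ℕ → ℕ) (x : ℝ) (n : ℕ) :
    ∑ i ∈ Finset.Icc 1 (2 ^ k),
        (-1 : ℝ) ^ binDigitSum (i - 1) * sigmaSeq k a x ((n : ℤ) - (bAssocNat k a i : ℤ))
      = ∑ S ∈ (range k).powerset, (-1 : ℝ) ^ S.card *
          sigmaSeq k a x ((n : ℤ) -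
            ((∑ j ∈ Finset.Icc 1 k, if j - 1 ∈ S then a j else 0 : ℕ) : ℤ)) := by
  apply Finset.sum_nbij' (i := fun i => (i - 1).bitIndices.toFinset)
    (j := fun S => 1 + ∑ t ∈ S, 2 ^ t)
  · intro i hi
    simp only [Finset.mem_Icc] at hi
    rw [Finset.mem_powerset]
    intro u hu
    rw [List.mem_toFinset] at hu
    have h1 : 2 ^ u ≤ i - 1 := Nat.two_pow_le_of_mem_bitIndices hu
    have h2 : i - 1 < 2 ^ k := by omega
    rw [Finset.mem_range]
    exact (Nat.pow_lt_pow_iff_right (by norm_num)).mp (lt_of_le_of_lt h1 h2)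
  · intro S hS
    rw [Finset.mem_powerset] at hS
    have := sum_two_pow_lt hS
    simp only [Finset.mem_Icc]
    omega
  · intro i hi
    simp only [Finset.mem_Icc] at hi
    rw [Finset.twoPowSum_toFinset_bitIndices]
    omega
  · intro S hS
    simp [Finset.toFinset_bitIndices_twoPowSum]
  · intro i hi
    simp only [Finset.mem_Icc] at hi
    have hm : i - 1 < 2 ^ k := by omega
    have hcard : binDigitSum (i - 1) = ((i - 1).bitIndices.toFinset).card := by
      rw [binDigitSum_eq_sum_testBit k _ hm]
      have hsub : (i - 1).bitIndices.toFinset ⊆ range k := by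
        intro u hu
        rw [List.mem_toFinset] at hu
        have h1 : 2 ^ u ≤ i - 1 := Nat.two_pow_le_of_mem_bitIndices hu
        rw [Finset.mem_range]
        exact (Nat.pow_lt_pow_iff_right (by norm_num)).mp (lt_of_le_of_lt h1 hm)
      have hpt : ∀ t ∈ range k, ((i - 1).testBit t).toNat
          = if t ∈ (i - 1).bitIndices.toFinset then 1 else 0 := by
        intro t _
        rw [testBit_eq_mem]
        by_cases h : t ∈ (i - 1).bitIndices.toFinset <;> simp [h]
      rw [Finset.sum_congr rfl hpt, Finset.sum_ite_mem,
        Finset.inter_eq_right.mpr hsub, Finset.card_eq_sum_ones]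
    have hb : bAssocNat k a i = ∑ j ∈ Finset.Icc 1 k,
        if j - 1 ∈ (i - 1).bitIndices.toFinset then a j else 0 := by
      unfold bAssocNat
      refine Finset.sum_congr rfl fun j _ => ?_
      rw [testBit_eq_mem]
      simp
    rw [hcard, hb]

/-- If `n > b_{2^k} = a_1 + … + a_k`, the compensating term vanishes and
`σ_x^{(A)}(n) = ∑_{i=2}^{2^k} (-1)^{s(2i-1)} σ_x^{(A)}(n - b_i)`. -/
theorem stmt_9 (k : ℕ) (hk : 1 ≤ k) (a : ℕ → ℕ)
    (hpos : ∀ j, 1 ≤ j → j ≤ k → 0 < a j) (x : ℝ) (n : ℕ)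
    (hn : ∑ j ∈ Finset.Icc 1 k, a j < n) :
    sigmaSeq k a x n =
      ∑ i ∈ Finset.Icc 2 (2 ^ k),
        (-1 : ℝ) ^ binDigitSum (2 * i - 1) *
          sigmaSeq k a x ((n : ℤ) - (bAssocNat k a i : ℤ)) := by
  have h2k : 2 ≤ 2 ^ k := by
    calc (2 : ℕ) = 2 ^ 1 := rfl
    _ ≤ 2 ^ k := Nat.pow_le_pow_right (by norm_num) hk
  have key : ∑ i ∈ Finset.Icc 1 (2 ^ k),
      (-1 : ℝ) ^ binDigitSum (i - 1) * sigmaSeq k a x ((n : ℤ) - (bAssocNat k a i : ℤ)) = 0 := by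
    rw [icc_to_powerset]; exact core_zero k a x n hn
  have hsplit : Finset.Icc 1 (2 ^ k) = insert 1 (Finset.Icc 2 (2 ^ k)) := by
    ext t; simp only [Finset.mem_Icc, Finset.mem_insert]; omega
  rw [hsplit, Finset.sum_insert (by simp [Finset.mem_Icc])] at key
  have hb1 : bAssocNat k a 1 = 0 := by simp [bAssocNat]
  rw [hb1] at key
  simp only [Nat.sub_self, binDigitSum_zero', pow_zero, one_mul, Nat.cast_zero, sub_zero] at key
  have hsign : ∀ i ∈ Finset.Icc 2 (2 ^ k),
      (-1 : ℝ) ^ binDigitSum (2 * i - 1) * sigmaSeq k a x ((n : ℤ) - (bAssocNat k a i : ℤ))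
        = -((-1 : ℝ) ^ binDigitSum (i - 1) *
            sigmaSeq k a x ((n : ℤ) - (bAssocNat k a i : ℤ))) := by
    intro i hi
    simp only [Finset.mem_Icc] at hi
    have h21 : 2 * i - 1 = 2 * (i - 1) + 1 := by omega
    rw [h21, binDigitSum_two_mul_add_one, pow_succ]
    ring
  rw [Finset.sum_congr rfl hsign, Finset.sum_neg_distrib]
  linarith
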